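/- Let σ₁, …, σ_n be a list of sequences over a finite set A that is strongly complete, with n = |A|, and let x be a letter not in A. Then the sequence x σ₁ x σ₂ x ⋯ x σ_n x (the concatenation of σ₁, …, σ_n with one occurrence of x before, between, and after them, n+1 occurrences of x in total) is a supersequence over A ∪ {x}. -/

import Mathlib

lemma flatten_sublist_aux (x : ℕ) : ∀ M : List (List ℕ),
    M.flatten.Sublist ((M.map (fun σ => σ ++ [x])).flatten)
  | [] => List.Sublist.refl _
  | m :: M => by
    simpa using List.Sublist.append (List.sublist_append_left m [x])
      (flatten_sublist_aux x M)

lemma flatten_x_sublist (x : ℕ) : ∀ M : List (List ℕ), M ≠ [] →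
    (M.flatten ++ [x]).Sublist ((M.map (fun σ => σ ++ [x])).flatten)
  | [], h => absurd rfl h
  | [m], _ => by simp
  | m :: m' :: M, _ => by
    have ih := flatten_x_sublist x (m' :: M) (by simp)
    simpa [List.append_assoc] using
      List.Sublist.append (List.sublist_append_left m [x]) ih


/-- `ρ ∈ [A]_k`: a sequence over `A` of length `k` with pairwise distinct elements. -/
def DistinctSeq (A : Finset ℕ) (k : ℕ) (ρ : List ℕ) : Prop :=
  ρ.length = k ∧ ρ.Nodup ∧ ∀ a ∈ ρ, a ∈ A

/-- `σ` is `k`-complete over `A`: every member of `[A]_k` is a subsequence of `σ`. -/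
def IsKComplete (A : Finset ℕ) (k : ℕ) (σ : List ℕ) : Prop :=
  ∀ ρ : List ℕ, DistinctSeq A k ρ → ρ.Sublist σ

/-- `σ` is a supersequence over `A`: it contains every permutation of `A` as a
subsequence, i.e. it is `|A|`-complete. -/
def IsSupersequence (A : Finset ℕ) (σ : List ℕ) : Prop :=
  IsKComplete A A.card σ

/-- A list of sequences `σ₁, …, σ_n` is forward complete if for every `1 ≤ k ≤ n`,
the concatenation `σ₁σ₂⋯σ_k` is `k`-complete. -/
def ForwardComplete (A : Finset ℕ) (L : List (List ℕ)) : Prop :=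
  ∀ k, 1 ≤ k → k ≤ L.length → IsKComplete A k ((L.take k).flatten)

/-- A list of sequences `σ₁, …, σ_n` is backward complete if for every `1 ≤ k ≤ n`,
the concatenation `σ_{n-k+1}⋯σ_n` is `k`-complete. -/
def BackwardComplete (A : Finset ℕ) (L : List (List ℕ)) : Prop :=
  ∀ k, 1 ≤ k → k ≤ L.length → IsKComplete A k ((L.drop (L.length - k)).flatten)

/-- Strongly complete: both forward and backward complete. -/
def StronglyComplete (A : Finset ℕ) (L : List (List ℕ)) : Prop :=
  ForwardComplete A L ∧ BackwardComplete A L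

/-- **Theorem 4.** If `σ₁, …, σ_n` is a strongly complete list over `A`
with `n = |A|` and `x ∉ A`, then `x σ₁ x σ₂ x ⋯ x σ_n x` is a supersequence over `A ∪ {x}`. -/
theorem interpose_isSupersequence (A : Finset ℕ) (L : List (List ℕ))
    (hover : ∀ σ ∈ L, ∀ a ∈ σ, a ∈ A) (hlen : L.length = A.card)
    (hsc : StronglyComplete A L) (x : ℕ) (hx : x ∉ A) :
    IsSupersequence (insert x A) (x :: (L.map (fun σ => σ ++ [x])).flatten) := by
  intro ρ hρ
  obtain ⟨hlenρ, hnd, hmem⟩ := hρ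
  have hcard : (insert x A).card = A.card + 1 := Finset.card_insert_of_notMem hx
  have hxρ : x ∈ ρ := by
    by_contra hxρ
    have hsub : ρ.toFinset ⊆ A := by
      intro a ha
      rw [List.mem_toFinset] at ha
      rcases Finset.mem_insert.mp (hmem a ha) with h | h
      · exact absurd (h ▸ ha) hxρ
      · exact h
    have h1 := Finset.card_le_card hsub
    rw [List.toFinset_card_of_nodup hnd, hlenρ, hcard] at h1
    omega
  obtain ⟨ρ₁, ρ₂, rfl⟩ := List.append_of_mem hxρ
  rw [List.nodup_append] at hnd
  obtain ⟨hnd₁, hnd₂', hdisj⟩ := hnd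
  have hxρ₂ : x ∉ ρ₂ := (List.nodup_cons.mp hnd₂').1
  have hnd₂ : ρ₂.Nodup := (List.nodup_cons.mp hnd₂').2
  have hxρ₁ : x ∉ ρ₁ := fun h => hdisj x h x List.mem_cons_self rfl
  have hmem₁ : ∀ a ∈ ρ₁, a ∈ A := by
    intro a ha
    rcases Finset.mem_insert.mp (hmem a (by simp [ha])) with h | h
    · exact absurd (h ▸ ha) hxρ₁
    · exact h
  have hmem₂ : ∀ a ∈ ρ₂, a ∈ A := by
    intro a ha
    rcases Finset.mem_insert.mp (hmem a (by simp [ha])) with h | h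
    · exact absurd (h ▸ ha) hxρ₂
    · exact h
  have hlensum : ρ₁.length + ρ₂.length = A.card := by
    simp [hcard] at hlenρ; omega
  set i := ρ₁.length with hi
  have hiL : i ≤ L.length := by omega
  -- ρ₂ is a sublist of the flatten of (L.drop i) with the extra x's
  have hρ₂ : ρ₂.Sublist (((L.drop i).map (fun σ => σ ++ [x])).flatten) := by
    rcases eq_or_ne ρ₂ [] with h | h
    · simp [h]
    · have hk1 : 1 ≤ ρ₂.length := List.length_pos_iff.mpr h
      have hdropeq : L.length - ρ₂.length = i := by omega
      have := hsc.2 ρ₂.length hk1 (by omega) ρ₂ ⟨rfl, hnd₂, hmem₂⟩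
      rw [hdropeq] at this
      exact this.trans (flatten_sublist_aux x _)
  have hsplit : ((L.map (fun σ => σ ++ [x])).flatten) =
      (((L.take i).map (fun σ => σ ++ [x])).flatten) ++
      (((L.drop i).map (fun σ => σ ++ [x])).flatten) := by
    rw [← List.flatten_append, ← List.map_append, List.take_append_drop]
  rcases Nat.eq_zero_or_pos i with h0 | hpos
  · have : ρ₁ = [] := List.eq_nil_of_length_eq_zero h0
    subst this
    simp only [List.nil_append]
    refine List.Sublist.cons₂ x ?_
    simpa using hρ₂.trans (by rw [hsplit]; exact List.sublist_append_right _ _)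
  · have hρ₁ : ρ₁.Sublist ((L.take i).flatten) :=
      hsc.1 i hpos hiL ρ₁ ⟨rfl, hnd₁, hmem₁⟩
    have htne : L.take i ≠ [] := by
      intro h
      have := congrArg List.length h
      rw [List.length_take] at this
      simp only [List.length_nil] at this
      omega
    have h1 : (ρ₁ ++ [x]).Sublist (((L.take i).map (fun σ => σ ++ [x])).flatten) :=
      (hρ₁.append_right [x]).trans (flatten_x_sublist x _ htne)
    have h2 := List.Sublist.append h1 hρ₂
    rw [hsplit]
    refine List.Sublist.cons x ?_
    simpa [List.append_assoc] using h2
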